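/- arXiv:0810.1195 — 2 statements merged into one kernel-verified Lean document; each statement's English description precedes it below -/
import Mathlib

section
/- For every E′ > 0, every n ∈ ℕ₀ and both choices of sign, the function f_n^± is a generalized eigenfunction of the inverted harmonic oscillator with purely imaginary eigenvalue: −½ (f_n^±)''(q) − (E′²/2) q² f_n^±(q) = ±iE′(n + ½) f_n^±(q) for all q ∈ ℝ. -/
open MeasureTheory Filter Complex

/-- Physicists' Hermite polynomials: `H₀ = 1`, `H₁(y) = 2y`,
`H_{n+2}(y) = 2y H_{n+1}(y) − 2(n+1) H_n(y)`. -/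
noncomputable def hermitePoly : ℕ → ℂ → ℂ
  | 0, _ => 1
  | 1, y => 2 * y
  | (n + 2), y => 2 * y * hermitePoly (n + 1) y - 2 * (n + 1) * hermitePoly n y

/-- The generalized (resonance) eigenfunctions of the inverted harmonic
oscillator: `f_n^±(q) = (E′/π)^{1/4} (2ⁿ n!)^{−1/2} e^{±iπ/8} e^{∓i(E′/2)q²}
H_n(e^{±iπ/4} √(E′) q)`, with sign `s = ±1`. -/
noncomputable def fres (E' s : ℝ) (n : ℕ) (q : ℝ) : ℂ :=
  (((E' / Real.pi) ^ ((1 : ℝ) / 4) : ℝ) : ℂ) *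
    (((Real.sqrt (2 ^ n * n.factorial) : ℝ) : ℂ))⁻¹ *
    Complex.exp ((s : ℂ) * Complex.I * (Real.pi : ℂ) / 8) *
    Complex.exp (-(s : ℂ) * Complex.I * ((E' / 2 : ℝ) : ℂ) * (q : ℂ) ^ 2) *
    hermitePoly n (Complex.exp ((s : ℂ) * Complex.I * (Real.pi : ℂ) / 4) *
      ((Real.sqrt E' : ℝ) : ℂ) * (q : ℂ))

noncomputable def hermDeriv : ℕ → ℂ → ℂ
  | 0, _ => 0
  | (n + 1), y => 2 * (n + 1) * hermitePoly n y

noncomputable def hermDeriv2 : ℕ → ℂ → ℂ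
  | 0, _ => 0
  | (n + 1), y => 2 * (n + 1) * hermDeriv n y

lemma hermite_hasDerivAt : ∀ n y, HasDerivAt (hermitePoly n) (hermDeriv n y) y := by
  intro n
  induction n using Nat.strong_induction_on with
  | _ n ih =>
    match n with
    | 0 =>
      intro y
      have : hermitePoly 0 = fun _ : ℂ => (1 : ℂ) := funext fun _ => rfl
      rw [this]
      simpa [hermDeriv] using hasDerivAt_const y (1 : ℂ)
    | 1 =>
      intro y
      have : hermitePoly 1 = fun y : ℂ => 2 * y := funext fun _ => rfl
      rw [this]
      have h := (hasDerivAt_id y).const_mul (2 : ℂ)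
      simpa [hermDeriv, hermitePoly] using h
    | (m + 2) =>
      intro y
      have h1 := ih (m + 1) (by omega) y
      have h0 := ih m (by omega) y
      have hfun : hermitePoly (m + 2) =
          fun y : ℂ => 2 * y * hermitePoly (m + 1) y - 2 * (m + 1) * hermitePoly m y :=
        funext fun _ => rfl
      rw [hfun]
      have hy : HasDerivAt (fun y : ℂ => 2 * y) 2 y := by
        simpa using (hasDerivAt_id y).const_mul (2 : ℂ)
      have hA := hy.mul h1
      have hB := h0.const_mul (2 * ((m : ℂ) + 1))
      have h := hA.sub hB
      refine h.congr_deriv (Eq.symm ?_)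
      match m with
      | 0 => simp [hermDeriv, hermitePoly]; ring
      | (k + 1) =>
        simp only [hermDeriv, hermitePoly]
        push_cast
        ring

lemma hermDeriv_hasDerivAt : ∀ n y, HasDerivAt (hermDeriv n) (hermDeriv2 n y) y := by
  intro n y
  match n with
  | 0 =>
    have : hermDeriv 0 = fun _ : ℂ => (0 : ℂ) := funext fun _ => rfl
    rw [this]
    simpa [hermDeriv2] using hasDerivAt_const y (0 : ℂ)
  | (m + 1) =>
    have : hermDeriv (m + 1) = fun y : ℂ => 2 * ((m : ℂ) + 1) * hermitePoly m y := by
      funext z; simp [hermDeriv]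
    rw [this]
    have h := (hermite_hasDerivAt m y).const_mul (2 * ((m : ℂ) + 1))
    simpa [hermDeriv2, mul_assoc] using h

lemma hermODE : ∀ n (y : ℂ),
    hermDeriv2 n y = 2 * y * hermDeriv n y - 2 * n * hermitePoly n y := by
  intro n y
  match n with
  | 0 => simp [hermDeriv2, hermDeriv, hermitePoly]
  | 1 => simp [hermDeriv2, hermDeriv, hermitePoly]; ring
  | (m + 2) =>
    simp only [hermDeriv2, hermDeriv, hermitePoly]
    push_cast
    ring

/-- `f_n^±` is a generalized eigenfunction of the inverted
harmonic oscillator with eigenvalue `±iE′(n + ½)`: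
`−½ (f_n^±)'' − (E′²/2) q² f_n^± = ±iE′(n + ½) f_n^±`. -/
theorem fres_eigenfunction (E' : ℝ) (hE' : 0 < E') (n : ℕ) (s : ℝ)
    (hs : s = 1 ∨ s = -1) (q : ℝ) :
    -(1 / 2 : ℂ) * deriv (deriv (fres E' s n)) q
        - ((E' ^ 2 / 2 : ℝ) : ℂ) * (q : ℂ) ^ 2 * fres E' s n q
      = (s : ℂ) * Complex.I * (E' : ℂ) * ((n : ℂ) + 1 / 2) * fres E' s n q := by
  have hs2 : (s : ℂ) ^ 2 = 1 := by rcases hs with h | h <;> simp [h]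
  set C : ℂ := (((E' / Real.pi) ^ ((1 : ℝ) / 4) : ℝ) : ℂ) *
      (((Real.sqrt (2 ^ n * n.factorial) : ℝ) : ℂ))⁻¹ *
      Complex.exp ((s : ℂ) * Complex.I * (Real.pi : ℂ) / 8) with hCdef
  set a : ℂ := -(s : ℂ) * Complex.I * ((E' / 2 : ℝ) : ℂ) with hadef
  set b : ℂ := Complex.exp ((s : ℂ) * Complex.I * (Real.pi : ℂ) / 4) *
      ((Real.sqrt E' : ℝ) : ℂ) with hbdef
  have hfres : fres E' s n =
      fun q : ℝ => C * (Complex.exp (a * (q : ℂ) ^ 2) * hermitePoly n (b * (q : ℂ))) := by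
    funext x
    simp only [fres, hCdef, hadef, hbdef]
    ring
  -- key complex-derivative facts
  have hb' : ∀ z : ℂ, HasDerivAt (fun z : ℂ => b * z) b z := fun z => by
    simpa using (hasDerivAt_id z).const_mul b
  have hp : ∀ z : ℂ, HasDerivAt (fun z : ℂ => a * z ^ 2) (a * (2 * z)) z := fun z => by
    have := (hasDerivAt_pow 2 z).const_mul a
    simpa [mul_assoc] using this
  have he : ∀ z : ℂ, HasDerivAt (fun z : ℂ => Complex.exp (a * z ^ 2))
      (Complex.exp (a * z ^ 2) * (a * (2 * z))) z := fun z => (hp z).cexp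
  have hh : ∀ z : ℂ, HasDerivAt (fun z : ℂ => hermitePoly n (b * z))
      (hermDeriv n (b * z) * b) z := fun z =>
    (hermite_hasDerivAt n (b * z)).comp z (hb' z)
  have key1 : ∀ z : ℂ, HasDerivAt
      (fun z : ℂ => C * (Complex.exp (a * z ^ 2) * hermitePoly n (b * z)))
      (C * (Complex.exp (a * z ^ 2) * (a * (2 * z)) * hermitePoly n (b * z)
        + Complex.exp (a * z ^ 2) * (hermDeriv n (b * z) * b))) z := fun z =>
    ((he z).mul (hh z)).const_mul C
  have hderiv1 : deriv (fres E' s n) = fun x : ℝ =>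
      C * (Complex.exp (a * (x : ℂ) ^ 2) * (a * (2 * (x : ℂ))) * hermitePoly n (b * (x : ℂ))
        + Complex.exp (a * (x : ℂ) ^ 2) * (hermDeriv n (b * (x : ℂ)) * b)) := by
    funext x
    rw [hfres]
    exact ((key1 (x : ℂ)).comp_ofReal).deriv
  -- second derivative
  have haz : ∀ z : ℂ, HasDerivAt (fun z : ℂ => a * (2 * z)) (a * 2) z := fun z => by
    simpa [mul_assoc] using ((hasDerivAt_id z).const_mul (2 : ℂ)).const_mul a
  have hh2 : ∀ z : ℂ, HasDerivAt (fun z : ℂ => hermDeriv n (b * z))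
      (hermDeriv2 n (b * z) * b) z := fun z =>
    (hermDeriv_hasDerivAt n (b * z)).comp z (hb' z)
  have key2 : ∀ z : ℂ, HasDerivAt
      (fun z : ℂ => C * (Complex.exp (a * z ^ 2) * (a * (2 * z)) * hermitePoly n (b * z)
        + Complex.exp (a * z ^ 2) * (hermDeriv n (b * z) * b)))
      (C * (((Complex.exp (a * z ^ 2) * (a * (2 * z)) * (a * (2 * z))
              + Complex.exp (a * z ^ 2) * (a * 2)) * hermitePoly n (b * z)
            + Complex.exp (a * z ^ 2) * (a * (2 * z)) * (hermDeriv n (b * z) * b))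
        + (Complex.exp (a * z ^ 2) * (a * (2 * z)) * (hermDeriv n (b * z) * b)
            + Complex.exp (a * z ^ 2) * (hermDeriv2 n (b * z) * b * b)))) z := fun z => by
    have t1 := (((he z).mul (haz z)).mul (hh z))
    have t2 := (he z).mul ((hh2 z).mul_const b)
    exact (t1.add t2).const_mul C
  have hderiv2 : deriv (deriv (fres E' s n)) q =
      C * (((Complex.exp (a * (q:ℂ) ^ 2) * (a * (2 * (q:ℂ))) * (a * (2 * (q:ℂ)))
              + Complex.exp (a * (q:ℂ) ^ 2) * (a * 2)) * hermitePoly n (b * (q:ℂ))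
            + Complex.exp (a * (q:ℂ) ^ 2) * (a * (2 * (q:ℂ))) * (hermDeriv n (b * (q:ℂ)) * b))
        + (Complex.exp (a * (q:ℂ) ^ 2) * (a * (2 * (q:ℂ))) * (hermDeriv n (b * (q:ℂ)) * b)
            + Complex.exp (a * (q:ℂ) ^ 2) * (hermDeriv2 n (b * (q:ℂ)) * b * b))) := by
    rw [hderiv1]
    exact ((key2 (q : ℂ)).comp_ofReal).deriv
  have hb2 : b ^ 2 = (s : ℂ) * Complex.I * (E' : ℂ) := by
    have hsq : ((Real.sqrt E' : ℝ) : ℂ) ^ 2 = (E' : ℂ) := by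
      rw [← Complex.ofReal_pow, Real.sq_sqrt hE'.le]
    have e1 : (s : ℂ) * Complex.I * (Real.pi : ℂ) / 4 + (s : ℂ) * Complex.I * (Real.pi : ℂ) / 4
        = ((s * (Real.pi / 2) : ℝ) : ℂ) * Complex.I := by push_cast; ring
    rw [hbdef, mul_pow, hsq, sq, ← Complex.exp_add, e1, Complex.exp_mul_I]
    rcases hs with h | h <;> subst h <;>
      norm_num [← Complex.ofReal_cos, ← Complex.ofReal_sin, Real.cos_pi_div_two,
        Real.sin_pi_div_two]
  have hb4 : b ^ 4 = -(E' : ℂ) ^ 2 := by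
    have : b ^ 4 = (b ^ 2) ^ 2 := by ring
    rw [this, hb2]
    rw [show ((s:ℂ) * Complex.I * (E':ℂ)) ^ 2 = (s:ℂ)^2 * Complex.I^2 * (E':ℂ)^2 by ring,
      hs2, Complex.I_sq]
    ring
  have ha2 : a = -b ^ 2 / 2 := by
    rw [hb2, hadef]; push_cast; ring
  rw [hderiv2, hfres, hermODE n (b * (q:ℂ)), ha2, ← hb2]
  push_cast
  linear_combination (-(C * Complex.exp (-b ^ 2 / 2 * (q:ℂ) ^ 2) *
    hermitePoly n (b * (q:ℂ)) * (q:ℂ) ^ 2) / 2) * hb4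
end

section
/- Let E > 0 and fix a sign s ∈ {+1,−1}. If f: ℝ² → ℂ is continuously differentiable and satisfies the pair of first-order equations (∂_t f − ∂_x f)(t,x) = −s·iE(t + x) f(t,x) and (∂_t f + ∂_x f)(t,x) = −s·iE(t − x) f(t,x) for all (t,x) ∈ ℝ², then f(t,x) = f(0,0) e^{−s·iE(t²−x²)/2} for all (t,x). In particular, the simultaneous kernel of the two annihilation operators a₁^{−s}, a₂^{−s} is one-dimensional, spanned by the Gaussian phase e^{−s·iE(t²−x²)/2}. -/
open MeasureTheory Filter Complex

/-- Partial derivative in the first ("time") variable. -/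
noncomputable def dTu (f : ℝ × ℝ → ℂ) (p : ℝ × ℝ) : ℂ := deriv (fun a => f (a, p.2)) p.1

/-- Partial derivative in the second ("space") variable. -/
noncomputable def dXu (f : ℝ × ℝ → ℂ) (p : ℝ × ℝ) : ℂ := deriv (fun b => f (p.1, b)) p.2

lemma ode_gauss (c : ℂ) (u : ℝ → ℂ) (hu : Differentiable ℝ u)
    (h : ∀ t, deriv u t = c * t * u t) :
    ∀ t : ℝ, u t = u 0 * Complex.exp (c * t ^ 2 / 2) := by
  have hg : ∀ t : ℝ, HasDerivAt (fun t : ℝ => Complex.exp (-c * (t : ℂ) ^ 2 / 2))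
      (Complex.exp (-c * (t : ℂ) ^ 2 / 2) * (-c * t)) t := by
    intro t
    have h1 : HasDerivAt (fun t : ℝ => (t : ℂ)) 1 t := Complex.ofRealCLM.hasDerivAt
    have h2 : HasDerivAt (fun t : ℝ => -c * (t : ℂ) ^ 2 / 2) (-c * t) t := by
      have := ((h1.mul h1 : HasDerivAt (fun y : ℝ => (y : ℂ) * (y : ℂ)) _ t).const_mul (-c)).div_const 2
      simp only [pow_two]
      refine this.congr_deriv ?_
      ring
    simpa using h2.cexp
  have hv : ∀ t : ℝ, deriv (fun t => u t * Complex.exp (-c * (t : ℂ) ^ 2 / 2)) t = 0 := by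
    intro t
    have hu' : HasDerivAt u (c * t * u t) t := by
      rw [← h t]; exact (hu t).hasDerivAt
    have := hu'.mul (hg t)
    rw [show (fun t => u t * Complex.exp (-c * (t : ℂ) ^ 2 / 2)) = (u * fun (t : ℝ) => Complex.exp (-c * (t : ℂ) ^ 2 / 2)) from rfl, this.deriv]
    ring
  have hvd : Differentiable ℝ (fun t => u t * Complex.exp (-c * (t : ℂ) ^ 2 / 2)) := by
    intro t
    exact ((hu t).hasDerivAt.mul (hg t)).differentiableAt
  intro t
  have := is_const_of_deriv_eq_zero hvd hv t 0
  simp only [Complex.ofReal_zero] at this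
  have h0 : u t * Complex.exp (-c * (t : ℂ) ^ 2 / 2) = u 0 := by
    simpa using this
  have := congrArg (· * Complex.exp (c * (t : ℂ) ^ 2 / 2)) h0
  rw [mul_assoc, ← Complex.exp_add] at this
  convert this using 2
  ring_nf
  simp

/-- a continuously differentiable solution of the pair of
first-order equations `(∂_t − ∂_x)f = −s·iE(t+x)f` and
`(∂_t + ∂_x)f = −s·iE(t−x)f` is the Gaussian phase
`f(t,x) = f(0,0) e^{−s·iE(t²−x²)/2}`; in particular the simultaneous kernel of
the annihilation operators `a₁^{−s}, a₂^{−s}` is one-dimensional. -/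
theorem ground_state_unique (E s : ℝ) (hE : 0 < E) (hs : s = 1 ∨ s = -1)
    (f : ℝ × ℝ → ℂ) (hf : ContDiff ℝ 1 f)
    (h1 : ∀ p : ℝ × ℝ, dTu f p - dXu f p
      = -(s : ℂ) * Complex.I * (E : ℂ) * ((p.1 : ℂ) + (p.2 : ℂ)) * f p)
    (h2 : ∀ p : ℝ × ℝ, dTu f p + dXu f p
      = -(s : ℂ) * Complex.I * (E : ℂ) * ((p.1 : ℂ) - (p.2 : ℂ)) * f p) :
    ∀ p : ℝ × ℝ, f p = f (0, 0) *
      Complex.exp (-(s : ℂ) * Complex.I * (E : ℂ) * ((p.1 : ℂ) ^ 2 - (p.2 : ℂ) ^ 2) / 2) := by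
  have hfd : Differentiable ℝ f := hf.differentiable one_ne_zero
  have hT : ∀ p : ℝ × ℝ, dTu f p = -(s : ℂ) * Complex.I * (E : ℂ) * (p.1 : ℂ) * f p := by
    intro p; linear_combination (h1 p) / 2 + (h2 p) / 2
  have hX : ∀ p : ℝ × ℝ, dXu f p = (s : ℂ) * Complex.I * (E : ℂ) * (p.2 : ℂ) * f p := by
    intro p; linear_combination (h2 p) / 2 - (h1 p) / 2
  rintro ⟨t, x⟩
  -- in the time direction at fixed x
  have hdt : ∀ x : ℝ, Differentiable ℝ (fun a : ℝ => f (a, x)) := fun x =>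
    hfd.comp (differentiable_id.prodMk (differentiable_const x))
  have hdx : Differentiable ℝ (fun b : ℝ => f (0, b)) :=
    hfd.comp ((differentiable_const (0:ℝ)).prodMk differentiable_id)
  have key1 : ∀ x : ℝ, ∀ a : ℝ, f (a, x)
      = f (0, x) * Complex.exp (-(s : ℂ) * Complex.I * (E : ℂ) * (a : ℂ) ^ 2 / 2) := by
    intro x
    have := ode_gauss (-(s : ℂ) * Complex.I * (E : ℂ)) (fun a => f (a, x)) (hdt x)
      (fun a => by have := hT (a, x); simpa [dTu, mul_assoc] using this)
    intro a; simpa [mul_assoc] using this a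
  have key2 : f (0, x)
      = f (0, 0) * Complex.exp ((s : ℂ) * Complex.I * (E : ℂ) * (x : ℂ) ^ 2 / 2) := by
    have := ode_gauss ((s : ℂ) * Complex.I * (E : ℂ)) (fun b => f (0, b)) hdx
      (fun b => by have := hX (0, b); simpa [dXu, mul_assoc] using this)
    simpa [mul_assoc] using this x
  calc f (t, x) = f (0, x) * Complex.exp (-(s : ℂ) * Complex.I * (E : ℂ) * (t : ℂ) ^ 2 / 2) :=
        key1 x t
    _ = f (0, 0) * (Complex.exp ((s : ℂ) * Complex.I * (E : ℂ) * (x : ℂ) ^ 2 / 2)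
        * Complex.exp (-(s : ℂ) * Complex.I * (E : ℂ) * (t : ℂ) ^ 2 / 2)) := by
        rw [key2]; ring
    _ = f (0, 0) * Complex.exp (-(s : ℂ) * Complex.I * (E : ℂ) * ((t : ℂ) ^ 2 - (x : ℂ) ^ 2) / 2) := by
        rw [← Complex.exp_add]; ring_nf
end
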